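/- arXiv:1505.06929 — 3 statements merged into one kernel-verified Lean document; each statement's English description precedes it below -/
import Mathlib

section
/- Let α be a positive rational and F: N^r → Vect_K a functor. F is compact (every increasing chain of subfunctors with colimit F stabilizes) if and only if the left Kan extension α^!F: Q≥0^r → Vect_K is compact. -/
open CategoryTheory CategoryTheory.Limits

set_option synthInstance.maxHeartbeats 1000000
set_option maxHeartbeats 1000000

attribute [local instance 2000] Preorder.smallCategory

/-- The poset of `r`-tuples of non-negative rational numbers, with the componentwise order. -/
abbrev Qr (r : ℕ) := Fin r → ℚ≥0

/-- The poset of `r`-tuples of natural numbers, with the componentwise order. -/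
abbrev Nr (r : ℕ) := Fin r → ℕ

/-- `bfloor α v = join {w ∈ ℕ^r | α w ≤ v}`, computed componentwise as `⌊vᵢ/α⌋`. -/
def bfloor (α : ℚ≥0) {r : ℕ} (v : Qr r) : Nr r := fun i => Nat.floor ((v i : ℚ) / (α : ℚ))

/-- The embedding `α : ℕ^r → ℚ≥0^r`, `w ↦ α w`. -/
def embQ (α : ℚ≥0) {r : ℕ} (w : Nr r) : Qr r := fun i => α * (w i : ℚ≥0)

theorem bfloor_mono (α : ℚ≥0) (r : ℕ) : Monotone (bfloor α (r := r)) := by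
  intro v w h i
  exact Nat.floor_mono (by gcongr; exact_mod_cast h i)

theorem embQ_mono (α : ℚ≥0) (r : ℕ) : Monotone (embQ α (r := r)) := by
  intro v w h i
  dsimp [embQ]
  gcongr
  exact_mod_cast h i

/-- A functor `G : ℚ≥0^r ⥤ C` is `α`-tame if `G(α bα v ≤ v)` is an isomorphism for every `v`,
i.e. `G` is (isomorphic to) the left Kan extension along `α : ℕ^r → ℚ≥0^r` of its restriction;
equivalently, `G` is constant on the fundamental domains of `α`. -/
def IsAlphaTame {C : Type*} [Category C] (α : ℚ≥0) {r : ℕ} (G : Qr r ⥤ C) : Prop :=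
  ∀ (v : Qr r) (h : embQ α (bfloor α v) ≤ v), IsIso (G.map (homOfLE h))

/-- A functor is tame if it is `α`-tame for some positive rational `α`. -/
def IsTame {C : Type*} [Category C] {r : ℕ} (G : Qr r ⥤ C) : Prop :=
  ∃ α : ℚ≥0, 0 < α ∧ IsAlphaTame α G

/-- The functor `ℕ^r ⥤ ℚ≥0^r`, `w ↦ α w`. -/
def embFunctor (α : ℚ≥0) (r : ℕ) : Nr r ⥤ Qr r := (embQ_mono α r).functor

/-- A subfunctor of a functor `F : I ⥤ Vect_K`: a family of submodules compatible with the
structure maps of `F`. -/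
structure Subfunctor (K : Type) [Field K] {I : Type} [Category I] (F : I ⥤ ModuleCat K) where
  toFun : ∀ i, Submodule K (F.obj i)
  map_le : ∀ {i j : I} (h : i ⟶ j), Submodule.map (F.map h).hom (toFun i) ≤ toFun j

/-- `F` is compact: every increasing chain of subfunctors whose colimit (objectwise union)
is `F` stabilizes. -/
def IsCompactFunctor (K : Type) [Field K] {I : Type} [Category I] (F : I ⥤ ModuleCat K) :
    Prop :=
  ∀ S : ℕ → Subfunctor K F, (∀ n i, (S n).toFun i ≤ (S (n + 1)).toFun i) →
    (∀ i, ⨆ n, (S n).toFun i = ⊤) → ∃ k, ∀ i, (S k).toFun i = ⊤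

theorem embQ_le_iff {α : ℚ≥0} (hα : 0 < α) {r : ℕ} (w : Nr r) (v : Qr r) :
    embQ α w ≤ v ↔ w ≤ bfloor α v := by
  have hα' : (0:ℚ) < (α:ℚ) := by exact_mod_cast hα
  constructor
  · intro h i
    have h1 : (α : ℚ) * (w i : ℚ) ≤ (v i : ℚ) := by exact_mod_cast h i
    exact Nat.le_floor (by rw [le_div_iff₀ hα']; linarith [h1])
  · intro h i
    have h1 : (w i : ℚ) ≤ (v i : ℚ) / (α : ℚ) := by
      calc (w i : ℚ) ≤ (⌊(v i : ℚ) / (α : ℚ)⌋₊ : ℚ) := by exact_mod_cast h i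
        _ ≤ _ := Nat.floor_le (by positivity)
    show (α : ℚ≥0) * (w i) ≤ v i
    rw [← NNRat.coe_le_coe]
    push_cast
    rw [mul_comm, ← le_div_iff₀ hα']
    exact h1

theorem embQ_bfloor_le {α : ℚ≥0} (hα : 0 < α) {r : ℕ} (v : Qr r) :
    embQ α (bfloor α v) ≤ v := (embQ_le_iff hα _ v).mpr le_rfl

theorem bfloor_embQ {α : ℚ≥0} (hα : 0 < α) {r : ℕ} (w : Nr r) :
    bfloor α (embQ α w) = w := by
  funext i
  have hα' : (0:ℚ) < (α:ℚ) := by exact_mod_cast hα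
  simp only [bfloor, embQ, NNRat.coe_mul, NNRat.coe_natCast]
  rw [mul_comm, mul_div_assoc, div_self hα'.ne', mul_one, Nat.floor_natCast]

section Cat

variable {r : ℕ} {α : ℚ≥0}

instance : (embFunctor α r).Faithful := ⟨fun _ => Subsingleton.elim _ _⟩

theorem embFunctor_full (hα : 0 < α) : (embFunctor α r).Full := by
  constructor
  intro w w' f
  refine ⟨homOfLE fun i => ?_, Subsingleton.elim _ _⟩
  have h : embQ α w ≤ embQ α w' := leOfHom f
  have := h i
  simp only [embQ] at this
  exact_mod_cast le_of_mul_le_mul_left this hα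

/-- The terminal object of the comma category `(embFunctor α r) ↓ v`. -/
noncomputable def btermIsTerminal (hα : 0 < α) (v : Qr r) :
    IsTerminal (CostructuredArrow.mk (S := embFunctor α r) (T := v) (Y := bfloor α v)
      (homOfLE (embQ_bfloor_le hα v))) := by
  refine IsTerminal.ofUniqueHom (fun g => CostructuredArrow.homMk
      (homOfLE ((embQ_le_iff hα _ v).mp (leOfHom g.hom)))
      (Subsingleton.elim _ _)) (fun g m => ?_)
  apply CostructuredArrow.hom_ext
  exact Subsingleton.elim _ _

end Cat

section Kan

variable {r : ℕ} {α : ℚ≥0} (K : Type) [Field K] (F : Nr r ⥤ ModuleCat K)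

/-- The canonical map `F(w) ⟶ (α^! F)(v)` for `α w ≤ v`. -/
noncomputable def theta {w : Nr r} {v : Qr r} (h : embQ α w ≤ v) :
    F.obj w ⟶ ((embFunctor α r).leftKanExtension F).obj v :=
  ((embFunctor α r).leftKanExtensionUnit F).app w ≫
    ((embFunctor α r).leftKanExtension F).map
      (homOfLE h : (embFunctor α r).obj w ⟶ v)

theorem isIso_unit_app (hα : 0 < α) (w : Nr r) :
    IsIso (((embFunctor α r).leftKanExtensionUnit F).app w) := by
  haveI := embFunctor_full (r := r) hα
  exact (Functor.isPointwiseLeftKanExtensionLeftKanExtensionUnit (embFunctor α r) F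
    ((embFunctor α r).obj w)).isIso_hom_app

theorem isIso_theta_bfloor (hα : 0 < α) (v : Qr r) :
    IsIso (theta K F (embQ_bfloor_le hα v)) := by
  have h := (Functor.isPointwiseLeftKanExtensionLeftKanExtensionUnit (embFunctor α r) F
    v).isIso_ι_app_of_isTerminal _ (btermIsTerminal hα v)
  exact h

theorem theta_comp {w : Nr r} {v v' : Qr r} (h1 : embQ α w ≤ v) (h2 : v ≤ v') :
    theta K F h1 ≫ ((embFunctor α r).leftKanExtension F).map (homOfLE h2) =
      theta K F (h1.trans h2) := by
  rw [theta, theta, Category.assoc, ← Functor.map_comp]; rfl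

theorem theta_emb {w w₀ : Nr r} (hw : w ≤ w₀) (h : embQ α w ≤ embQ α w₀) :
    theta K F h = F.map (homOfLE hw) ≫
      ((embFunctor α r).leftKanExtensionUnit F).app w₀ := by
  rw [theta]
  have heq : (homOfLE h : (embFunctor α r).obj w ⟶ (embFunctor α r).obj w₀) =
      (embFunctor α r).map (homOfLE hw) := Subsingleton.elim _ _
  show _ ≫ ((embFunctor α r).leftKanExtension F).map ((embFunctor α r).map (homOfLE hw)) = _
  exact (((embFunctor α r).leftKanExtensionUnit F).naturality (homOfLE hw)).symm

theorem moduleCat_iso_bijective {M N : ModuleCat K} (f : M ⟶ N) [IsIso f] :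
    Function.Bijective (f.hom : M →ₗ[K] N) := by
  have h1 : (inv f).hom.comp f.hom = LinearMap.id := by
    rw [← ModuleCat.hom_comp, IsIso.hom_inv_id, ModuleCat.hom_id]
  have h2 : f.hom.comp (inv f).hom = LinearMap.id := by
    rw [← ModuleCat.hom_comp, IsIso.inv_hom_id, ModuleCat.hom_id]
  exact Function.bijective_iff_has_inverse.mpr
    ⟨(inv f).hom, fun x => LinearMap.congr_fun h1 x, fun x => LinearMap.congr_fun h2 x⟩

end Kan

theorem map_cat_comp {K : Type} [Field K] {M N P : ModuleCat K} (f : M ⟶ N) (g : N ⟶ P)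
    (p : Submodule K M) :
    Submodule.map (f ≫ g).hom p = Submodule.map g.hom (Submodule.map f.hom p) :=
  Submodule.map_comp f.hom g.hom p

theorem comap_cat_comp {K : Type} [Field K] {M N P : ModuleCat K} (f : M ⟶ N) (g : N ⟶ P)
    (p : Submodule K P) :
    Submodule.comap (f ≫ g).hom p = Submodule.comap f.hom (Submodule.comap g.hom p) :=
  Submodule.comap_comp f.hom g.hom p

/-- For a positive rational `α`, a functor `F : ℕ^r ⥤ Vect_K` is compact if and only if its
left Kan extension `α^! F : ℚ≥0^r ⥤ Vect_K` is compact. -/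
theorem isCompact_iff_isCompact_lan (K : Type) [Field K] (r : ℕ) (α : ℚ≥0) (hα : 0 < α)
    (F : Nr r ⥤ ModuleCat K) :
    IsCompactFunctor K F ↔
      IsCompactFunctor K ((embFunctor α r).leftKanExtension F) := by
  have hηbij : ∀ w : Nr r,
      Function.Bijective (((embFunctor α r).leftKanExtensionUnit F).app w) := fun w => by
    haveI := isIso_unit_app K F hα w
    exact moduleCat_iso_bijective K _
  have hθbij : ∀ v : Qr r, Function.Bijective (theta K F (embQ_bfloor_le hα v)) := fun v => by
    haveI := isIso_theta_bfloor K F hα v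
    exact moduleCat_iso_bijective K _
  constructor
  · -- F compact → Lan F compact
    intro hF S hmono hsup
    have hFc := hF (fun n =>
      { toFun := fun w => Submodule.comap (((embFunctor α r).leftKanExtensionUnit F).app w).hom
          ((S n).toFun ((embFunctor α r).obj w))
        map_le := by
          intro w w' h
          rw [Submodule.map_le_iff_le_comap, ← comap_cat_comp,
            ((embFunctor α r).leftKanExtensionUnit F).naturality h, comap_cat_comp]
          exact Submodule.comap_mono
            (Submodule.map_le_iff_le_comap.mp ((S n).map_le ((embFunctor α r).map h))) })
      (fun n w => Submodule.comap_mono (hmono n _))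
      (by
        intro w
        rw [eq_top_iff]
        rintro x -
        have hx : ((embFunctor α r).leftKanExtensionUnit F).app w x ∈
            ⨆ n, (S n).toFun ((embFunctor α r).obj w) := by
          rw [hsup]; trivial
        obtain ⟨n, hn⟩ := (Submodule.mem_iSup_of_directed _
          ((monotone_nat_of_le_succ (fun n => hmono n _)).directed_le)).mp hx
        exact Submodule.mem_iSup_of_mem n hn)
    obtain ⟨k, hk⟩ := hFc
    refine ⟨k, fun v => ?_⟩
    rw [eq_top_iff]
    rintro x -
    obtain ⟨y, rfl⟩ := (hθbij v).2 x
    have hy : ((embFunctor α r).leftKanExtensionUnit F).app (bfloor α v) y ∈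
        (S k).toFun ((embFunctor α r).obj (bfloor α v)) := by
      have h3 : Submodule.comap (((embFunctor α r).leftKanExtensionUnit F).app (bfloor α v)).hom
          ((S k).toFun ((embFunctor α r).obj (bfloor α v))) = ⊤ := hk (bfloor α v)
      have : y ∈ Submodule.comap (((embFunctor α r).leftKanExtensionUnit F).app (bfloor α v)).hom
          ((S k).toFun ((embFunctor α r).obj (bfloor α v))) := by
        rw [h3]; trivial
      exact this
    exact (S k).map_le
      (homOfLE (embQ_bfloor_le hα v) : (embFunctor α r).obj (bfloor α v) ⟶ v)
      (Submodule.mem_map_of_mem hy)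
  · -- Lan F compact → F compact
    intro hG T hmono hsup
    have hGc := hG (fun n =>
      { toFun := fun v => ⨆ (w : Nr r) (h : embQ α w ≤ v),
          Submodule.map (theta K F h).hom ((T n).toFun w)
        map_le := by
          intro v v' h
          have hvv' : v ≤ v' := leOfHom h
          have hh : h = homOfLE hvv' := Subsingleton.elim _ _
          subst hh
          rw [Submodule.map_iSup]
          refine iSup_le fun w => ?_
          rw [Submodule.map_iSup]
          refine iSup_le fun hw => ?_
          rw [← map_cat_comp, theta_comp K F hw hvv']
          exact le_iSup_of_le w (le_iSup_of_le (hw.trans hvv') le_rfl) })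
      (fun n v => iSup_mono fun w => iSup_mono fun h => Submodule.map_mono (hmono n w))
      (by
        intro v
        rw [eq_top_iff]
        have h1 : (⊤ : Submodule K (((embFunctor α r).leftKanExtension F).obj v)) =
            Submodule.map (theta K F (embQ_bfloor_le hα v)).hom ⊤ := by
          rw [Submodule.map_top, LinearMap.range_eq_top.mpr (hθbij v).2]
        rw [h1, ← hsup (bfloor α v), Submodule.map_iSup]
        refine iSup_le fun n => le_iSup_of_le n ?_
        exact le_iSup_of_le (bfloor α v) (le_iSup_of_le (embQ_bfloor_le hα v) le_rfl))
    obtain ⟨k, hk⟩ := hGc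
    refine ⟨k, fun w₀ => ?_⟩
    have h1 : Submodule.map (((embFunctor α r).leftKanExtensionUnit F).app w₀).hom
        ((T k).toFun w₀) = ⊤ := by
      rw [eq_top_iff]
      have h2 := hk ((embFunctor α r).obj w₀)
      rw [← h2]
      refine iSup_le fun w => iSup_le fun h => ?_
      have hw : w ≤ w₀ := by
        have h' : embQ α w ≤ embQ α w₀ := h
        have := (embQ_le_iff hα w (embQ α w₀)).mp h'
        rwa [bfloor_embQ hα] at this
      erw [theta_emb K F hw h]
      rw [map_cat_comp]
      exact Submodule.map_mono ((T k).map_le (homOfLE hw))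
    have hrange : Submodule.map (((embFunctor α r).leftKanExtensionUnit F).app w₀).hom
        (⊤ : Submodule K (F.obj w₀)) = ⊤ := by
      rw [Submodule.map_top]
      exact LinearMap.range_eq_top.mpr (hηbij w₀).2
    exact Submodule.map_injective_of_injective (hηbij w₀).1 (h1.trans hrange.symm)
end

section
/- Let V = Cone(v_1,…,v_n) and L = Cone(v_1+⋯+v_n) in Q≥0^r. If ‖v_1‖ = ⋯ = ‖v_n‖ = ‖v_1+⋯+v_n‖, then the standard noise systems in the direction of V and of L coincide: V_ε = L_ε for all ε. -/
open CategoryTheory CategoryTheory.Limits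

set_option synthInstance.maxHeartbeats 1000000
set_option maxHeartbeats 1000000

attribute [local instance 2000] Preorder.smallCategory
attribute [local instance] CategoryTheory.Abelian.hasFiniteBiproducts

/-- The cone generated by `g 0, …, g (n-1)`. -/
def coneOf {r n : ℕ} (g : Fin n → Qr r) : Set (Qr r) :=
  {w | ∃ c : Fin n → ℚ≥0, w = ∑ i, c i • g i}

/-- The max-norm on `ℚ≥0^r`. -/
def normQ {r : ℕ} (w : Qr r) : ℚ≥0 := Finset.univ.sup w

/-- The `ε`-component of the standard noise in the direction of a cone `V`. -/
def Veps (K : Type) [Field K] {r : ℕ} (V : Set (Qr r)) (ε : ℚ≥0) :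
    Set (Qr r ⥤ ModuleCat K) :=
  {F | IsTame F ∧ ∀ (u : Qr r) (x : F.obj u), ∃ w ∈ V, normQ w = ε ∧
    F.map (homOfLE (show u ≤ u + w from fun _ => le_self_add)) x = 0}

theorem normQ_mono {r : ℕ} {v w : Qr r} (h : v ≤ w) : normQ v ≤ normQ w :=
  Finset.sup_mono_fun (fun i _ => h i)

theorem normQ_smul {r : ℕ} (c : ℚ≥0) (w : Qr r) : normQ (c • w) = c * normQ w := by
  have hmono : Monotone (fun x : ℚ≥0 => c * x) := fun a b h => mul_le_mul_right h c
  have := Finset.comp_sup_eq_sup_comp (s := (Finset.univ : Finset (Fin r))) (f := w)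
    (fun x : ℚ≥0 => c * x) (fun x y => hmono.map_sup x y) (by simp)
  simp only [normQ, this, Function.comp]
  rfl

theorem normQ_eq_zero {r : ℕ} {w : Qr r} (h : normQ w = 0) : w = 0 := by
  funext i
  have : w i ≤ normQ w := Finset.le_sup (Finset.mem_univ i)
  exact le_antisymm (by simpa [h] using this) zero_le

/-- If `‖v₁‖ = ⋯ = ‖vₙ‖ = ‖v₁ + ⋯ + vₙ‖`, then the standard noise in the direction of
`Cone(v₁,…,vₙ)` coincides with the standard noise in the direction of the ray
`Cone(v₁+⋯+vₙ)`. -/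
theorem standardNoise_cone_eq_ray (K : Type) [Field K] (r n : ℕ) (hn : 0 < n)
    (g : Fin n → Qr r) (hnorm : ∀ i, normQ (g i) = normQ (∑ j, g j)) :
    ∀ ε : ℚ≥0, Veps K (coneOf g) ε = Veps K (coneOf (fun _ : Fin 1 => ∑ j, g j)) ε := by
  intro ε
  ext F
  simp only [Veps, Set.mem_setOf_eq]
  constructor
  · rintro ⟨ht, hk⟩
    refine ⟨ht, fun u x => ?_⟩
    obtain ⟨w, ⟨c, hw⟩, hnormw, hkill⟩ := hk u x
    set s := ∑ j, g j with hs
    by_cases hN : normQ s = 0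
    · -- degenerate: all generators are zero, so w = 0
      have hsz : s = 0 := normQ_eq_zero hN
      have hgz : ∀ i, g i = 0 := fun i => normQ_eq_zero (by rw [hnorm i]; exact hN)
      have hw0 : w = 0 := by
        rw [hw]; simp [hgz]
      exact ⟨w, ⟨fun _ => 0, by simp [hw0]⟩, hnormw, hkill⟩
    · have hNpos : 0 < normQ s := lt_of_le_of_ne zero_le (Ne.symm hN)
      set cc := ε / normQ s with hcc
      have hci : ∀ i, c i ≤ cc := by
        intro i
        rw [hcc, le_div_iff₀ hNpos, ← hnorm i, ← normQ_smul, ← hnormw, hw]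
        refine normQ_mono (fun j => ?_)
        have : (fun k => c k • g k) i j ≤ ∑ k, (fun k => c k • g k) k j := by
          have := Finset.single_le_sum (f := fun k => (c k • g k) j)
            (fun k _ => zero_le) (Finset.mem_univ i)
          simpa using this
        simpa using this
      have hle : w ≤ cc • s := by
        intro j
        rw [hw]
        have : ∑ k, (c k • g k) j ≤ ∑ k, (cc • g k) j := by
          refine Finset.sum_le_sum (fun k _ => ?_)
          simpa [smul_eq_mul] using mul_le_mul_left (hci k) (g k j)
        simpa [Finset.sum_apply, hs, Finset.mul_sum, Pi.smul_apply] using this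
      refine ⟨cc • s, ⟨fun _ => cc, by simp⟩, ?_, ?_⟩
      · rw [normQ_smul, hcc, div_mul_cancel₀ _ hN]
      · have h1 : u ≤ u + w := fun _ => le_self_add
        have h2 : u + w ≤ u + cc • s := fun i => add_le_add_right (hle i) _
        have heq : (homOfLE (show u ≤ u + cc • s from fun _ => le_self_add)) =
            homOfLE h1 ≫ homOfLE h2 := rfl
        rw [heq, F.map_comp]
        have : F.map (homOfLE h1) x = 0 := hkill
        simp [this]
  · rintro ⟨ht, hk⟩
    refine ⟨ht, fun u x => ?_⟩
    obtain ⟨w, ⟨c, hw⟩, hnormw, hkill⟩ := hk u x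
    refine ⟨w, ⟨fun _ => c 0, ?_⟩, hnormw, hkill⟩
    rw [hw, Fin.sum_univ_one, Finset.smul_sum]
end

section
/- Fix a noise system on Tame(Q≥0^r, Vect_K). If φ: F → G is an ε₁-equivalence and ψ: G → H is an ε₂-equivalence, then ψ∘φ is an (ε₁+ε₂)-equivalence. Moreover, ε-equivalences are preserved by pushouts and pullbacks: in a pushout square with parallel arrows φ: H → F, φ': G → P, if φ is an ε-equivalence so is φ'; dually for pullbacks. -/
open CategoryTheory CategoryTheory.Limits

set_option synthInstance.maxHeartbeats 1000000
set_option maxHeartbeats 1000000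

attribute [local instance 2000] Preorder.smallCategory
attribute [local instance] CategoryTheory.Abelian.hasFiniteBiproducts

/-- A noise system in `Tame(ℚ≥0^r, Vect_K)`. -/
structure NoiseSystem (K : Type) [Field K] (r : ℕ) where
  S : ℚ≥0 → Set (Qr r ⥤ ModuleCat K)
  tame_mem : ∀ (ε : ℚ≥0) (F : Qr r ⥤ ModuleCat K), F ∈ S ε → IsTame F
  zero_mem : ∀ (ε : ℚ≥0) (F : Qr r ⥤ ModuleCat K), IsZero F → F ∈ S ε
  mono : ∀ τ ε : ℚ≥0, τ < ε → S τ ⊆ S ε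
  ses_small : ∀ (F G H : Qr r ⥤ ModuleCat K) (f : F ⟶ G) (g : G ⟶ H) (w : f ≫ g = 0),
    (ShortComplex.mk f g w).ShortExact → IsTame F → IsTame H →
      ∀ ε : ℚ≥0, G ∈ S ε → F ∈ S ε ∧ H ∈ S ε
  ses_add : ∀ (F G H : Qr r ⥤ ModuleCat K) (f : F ⟶ G) (g : G ⟶ H) (w : f ≫ g = 0),
    (ShortComplex.mk f g w).ShortExact → IsTame G →
      ∀ ε τ : ℚ≥0, F ∈ S ε → H ∈ S τ → G ∈ S (ε + τ)

/-- `φ` is an `ε`-equivalence: its kernel is `τ`-small and its cokernel is `μ`-small with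
`τ + μ ≤ ε`. -/
noncomputable def IsEpsEquiv {K : Type} [Field K] {r : ℕ} (N : NoiseSystem K r) (ε : ℚ≥0)
    {F G : Qr r ⥤ ModuleCat K} (φ : F ⟶ G) : Prop :=
  ∃ τ μ : ℚ≥0, τ + μ ≤ ε ∧ kernel φ ∈ N.S τ ∧ cokernel φ ∈ N.S μ


/-! ### Auxiliary lemmas -/

theorem le_embQ_bfloor (α : ℚ≥0) {r : ℕ} (v : Qr r) : embQ α (bfloor α v) ≤ v := by
  intro i
  dsimp [embQ, bfloor]
  rcases eq_or_lt_of_le (zero_le : (0:ℚ≥0) ≤ α) with h0 | h0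
  · simp [← h0]
  · have ha : (0:ℚ) < (α:ℚ) := by exact_mod_cast h0
    rw [← NNRat.coe_le_coe]
    push_cast
    calc (α:ℚ) * (⌊(v i : ℚ)/(α:ℚ)⌋₊ : ℚ) ≤ (α:ℚ) * ((v i : ℚ)/(α:ℚ)) := by
          gcongr; exact Nat.floor_le (by positivity)
      _ = (v i : ℚ) := mul_div_cancel₀ _ (ne_of_gt ha)

theorem IsAlphaTame.isIso_map {C : Type*} [Category C] {α : ℚ≥0} {r : ℕ} {G : Qr r ⥤ C}
    (hG : IsAlphaTame α G) {u v : Qr r} (huv : u ≤ v) (hfl : bfloor α u = bfloor α v) :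
    IsIso (G.map (homOfLE huv)) := by
  have h1 : embQ α (bfloor α u) ≤ u := le_embQ_bfloor α u
  have i1 := hG u h1
  have h2 : embQ α (bfloor α v) ≤ v := le_embQ_bfloor α v
  have i2 := hG v h2
  have e : embQ α (bfloor α u) = embQ α (bfloor α v) := by rw [hfl]
  have key : G.map (homOfLE h1) ≫ G.map (homOfLE huv) = G.map (eqToHom e) ≫ G.map (homOfLE h2) := by
    rw [← G.map_comp, ← G.map_comp]
    congr 1
  have : IsIso (G.map (homOfLE h1) ≫ G.map (homOfLE huv)) := by
    rw [key]; infer_instance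
  exact IsIso.of_isIso_comp_left (G.map (homOfLE h1)) (G.map (homOfLE huv))

theorem IsAlphaTame.div {C : Type*} [Category C] {α : ℚ≥0} (hα : 0 < α) {r : ℕ} {G : Qr r ⥤ C}
    (hG : IsAlphaTame α G) (n : ℕ) (hn : 0 < n) : IsAlphaTame (α / n) G := by
  intro v h
  apply hG.isIso_map
  funext i
  dsimp [bfloor, embQ]
  have ha : (0:ℚ) < (α:ℚ) := by exact_mod_cast hα
  have hn' : (0:ℚ) < (n:ℚ) := by exact_mod_cast hn
  have hx0 : (0:ℚ) ≤ (v i : ℚ) := (v i).coe_nonneg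
  push_cast
  set x : ℚ := (v i : ℚ)
  set a : ℚ := (α:ℚ)
  set N : ℚ := (n:ℚ)
  have hfr : x / (a / N) = N * (x / a) := by field_simp
  rw [hfr]
  apply le_antisymm
  · have hle : a / N * (⌊N * (x/a)⌋₊ : ℚ) ≤ x := by
      calc a / N * (⌊N * (x/a)⌋₊ : ℚ) ≤ a / N * (N * (x/a)) := by
            gcongr; exact Nat.floor_le (by positivity)
        _ = x := by field_simp
    exact Nat.floor_le_floor (by gcongr)
  · apply Nat.le_floor
    rw [le_div_iff₀ ha]
    have h1 : (n * ⌊x/a⌋₊ : ℕ) ≤ ⌊N * (x/a)⌋₊ := by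
      apply Nat.le_floor
      push_cast
      gcongr
      exact Nat.floor_le (by positivity)
    calc (⌊x/a⌋₊ : ℚ) * a = (a / N) * ((n * ⌊x/a⌋₊ : ℕ) : ℚ) := by push_cast; field_simp; ring
      _ ≤ (a / N) * (⌊N * (x/a)⌋₊ : ℚ) := by gcongr

theorem exists_common_alpha {C : Type*} [Category C] {r : ℕ} {A B : Qr r ⥤ C}
    (hA : IsTame A) (hB : IsTame B) : ∃ β : ℚ≥0, 0 < β ∧ IsAlphaTame β A ∧ IsAlphaTame β B := by
  obtain ⟨α, hα, hAα⟩ := hA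
  obtain ⟨γ, hγ, hBγ⟩ := hB
  have hα' : (0:ℚ) < (α:ℚ) := by exact_mod_cast hα
  have hγ' : (0:ℚ) < (γ:ℚ) := by exact_mod_cast hγ
  have hαn : 0 < (α:ℚ).num := Rat.num_pos.mpr hα'
  have hγn : 0 < (γ:ℚ).num := Rat.num_pos.mpr hγ'
  set n : ℕ := (α:ℚ).num.toNat * (γ:ℚ).den with hn
  set m : ℕ := (γ:ℚ).num.toNat * (α:ℚ).den with hm
  have hnpos : 0 < n := Nat.mul_pos (by omega) (γ:ℚ).pos
  have hmpos : 0 < m := Nat.mul_pos (by omega) (α:ℚ).pos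
  have e1 : ((((α:ℚ).num.toNat : ℕ)) : ℚ) = ((α:ℚ).num : ℚ) := by
    have : ((α:ℚ).num.toNat : ℤ) = (α:ℚ).num := by omega
    exact_mod_cast congrArg (fun z : ℤ => (z : ℚ)) this
  have e2 : ((((γ:ℚ).num.toNat : ℕ)) : ℚ) = ((γ:ℚ).num : ℚ) := by
    have : ((γ:ℚ).num.toNat : ℤ) = (γ:ℚ).num := by omega
    exact_mod_cast congrArg (fun z : ℤ => (z : ℚ)) this
  have key : α / (n : ℚ≥0) = γ / (m : ℚ≥0) := by
    rw [← NNRat.coe_inj]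
    push_cast
    rw [div_eq_div_iff (by exact_mod_cast hnpos.ne') (by exact_mod_cast hmpos.ne'), hn, hm]
    push_cast [e1, e2]
    have ha : (α:ℚ) * (((α:ℚ).den:ℕ) : ℚ) = (((α:ℚ).num : ℤ) : ℚ) := Rat.mul_den_eq_num _
    have hc : (γ:ℚ) * (((γ:ℚ).den:ℕ) : ℚ) = (((γ:ℚ).num : ℤ) : ℚ) := Rat.mul_den_eq_num _
    linear_combination (((γ:ℚ).num : ℤ) : ℚ) * ha - (((α:ℚ).num : ℤ) : ℚ) * hc
  refine ⟨α / (n : ℚ≥0), ?_, hAα.div hα n hnpos, ?_⟩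
  · apply div_pos hα (by exact_mod_cast hnpos)
  · rw [key]
    exact hBγ.div hγ m hmpos

section Cat
variable {K : Type} [Field K] {r : ℕ}

theorem isTame_of_iso {A B : Qr r ⥤ ModuleCat.{0} K} (e : A ≅ B) (hB : IsTame B) : IsTame A := by
  obtain ⟨α, hα, h⟩ := hB
  refine ⟨α, hα, fun v hv => ?_⟩
  have hiso := h v hv
  have : A.map (homOfLE hv) = e.hom.app _ ≫ B.map (homOfLE hv) ≫ e.inv.app _ := by
    rw [← NatTrans.naturality_assoc]
    simp
  rw [this]
  infer_instance

theorem isTame_of_isZero {A : Qr r ⥤ ModuleCat.{0} K} (h : IsZero A) : IsTame A := by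
  refine ⟨1, one_pos, fun v hv => ?_⟩
  have h1 : IsZero (A.obj (embQ 1 (bfloor 1 v))) := (Functor.isZero_iff A).mp h _
  have h2 : IsZero (A.obj v) := (Functor.isZero_iff A).mp h _
  have : A.map (homOfLE hv) = (h1.iso h2).hom := h1.eq_of_src _ _
  rw [this]
  infer_instance

noncomputable section

theorem isIso_kernel_map {A B : Qr r ⥤ ModuleCat.{0} K} (χ : A ⟶ B) {u v : Qr r} (huv : u ≤ v)
    (iA : IsIso (A.map (homOfLE huv))) (iB : IsIso (B.map (homOfLE huv))) :
    IsIso ((kernel χ).map (homOfLE huv)) := by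
  set f : u ⟶ v := homOfLE huv with hf
  set ι : kernel χ ⟶ A := kernel.ι χ with hι
  have hzu : ι.app u ≫ χ.app u = 0 := by rw [← NatTrans.comp_app, kernel.condition]; rfl
  have hzv : ι.app v ≫ χ.app v = 0 := by rw [← NatTrans.comp_app, kernel.condition]; rfl
  have hlimu : IsLimit (KernelFork.ofι (ι.app u) hzu : Fork (χ.app u) 0) :=
    isLimitForkMapOfIsLimit' ((evaluation (Qr r) (ModuleCat.{0} K)).obj u)
      (kernel.condition χ) (kernelIsKernel χ)
  have hχu : χ.app u = (A.map f ≫ χ.app v) ≫ inv (B.map f) := by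
    rw [IsIso.eq_comp_inv]
    exact (χ.naturality f).symm
  have cond : (ι.app v ≫ inv (A.map f)) ≫ χ.app u = 0 := by
    rw [Category.assoc, hχu]
    simp only [Category.assoc, IsIso.inv_hom_id_assoc]
    rw [← Category.assoc, hzv, zero_comp]
  obtain ⟨l, hl⟩ := KernelFork.IsLimit.lift' hlimu (ι.app v ≫ inv (A.map f)) cond
  have hl' : l ≫ ι.app u = ι.app v ≫ inv (A.map f) := hl
  have natf : (kernel χ).map f ≫ ι.app v = ι.app u ≫ A.map f := ι.naturality f
  have hmv : Mono (ι.app v) := by rw [hι]; infer_instance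
  have hmu : Mono (ι.app u) := by rw [hι]; infer_instance
  refine ⟨l, ?_, ?_⟩
  · rw [← cancel_mono (ι.app u), Category.assoc, hl', ← Category.assoc, natf]
    simp
  · rw [← cancel_mono (ι.app v), Category.assoc, natf, ← Category.assoc, hl']
    simp

theorem isIso_cokernel_map {A B : Qr r ⥤ ModuleCat.{0} K} (χ : A ⟶ B) {u v : Qr r} (huv : u ≤ v)
    (iA : IsIso (A.map (homOfLE huv))) (iB : IsIso (B.map (homOfLE huv))) :
    IsIso ((cokernel χ).map (homOfLE huv)) := by
  set f : u ⟶ v := homOfLE huv with hf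
  set π : B ⟶ cokernel χ := cokernel.π χ with hπ
  have hzu : χ.app u ≫ π.app u = 0 := by rw [← NatTrans.comp_app, cokernel.condition]; rfl
  have hzv : χ.app v ≫ π.app v = 0 := by rw [← NatTrans.comp_app, cokernel.condition]; rfl
  have hcolimv : IsColimit (CokernelCofork.ofπ (π.app v) hzv : Cofork (χ.app v) 0) :=
    isColimitCoforkMapOfIsColimit' ((evaluation (Qr r) (ModuleCat.{0} K)).obj v)
      (cokernel.condition χ) (cokernelIsCokernel χ)
  have hχv : χ.app v = inv (A.map f) ≫ (χ.app u ≫ B.map f) := by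
    rw [IsIso.eq_inv_comp]
    exact χ.naturality f
  have cond : χ.app v ≫ (inv (B.map f) ≫ π.app u) = 0 := by
    rw [hχv]
    simp only [Category.assoc, IsIso.hom_inv_id_assoc]
    rw [hzu, comp_zero]
  obtain ⟨l, hl⟩ := CokernelCofork.IsColimit.desc' hcolimv (inv (B.map f) ≫ π.app u) cond
  have hl' : π.app v ≫ l = inv (B.map f) ≫ π.app u := hl
  have natf : π.app u ≫ (cokernel χ).map f = B.map f ≫ π.app v := (π.naturality f).symm
  have heu : Epi (π.app u) := by rw [hπ]; infer_instance
  have hev : Epi (π.app v) := by rw [hπ]; infer_instance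
  refine ⟨l, ?_, ?_⟩
  · rw [← cancel_epi (π.app u), ← Category.assoc, natf, Category.assoc, hl']
    simp
  · rw [← cancel_epi (π.app v), ← Category.assoc, hl', Category.assoc, natf]
    simp

theorem isTame_kernel {A B : Qr r ⥤ ModuleCat.{0} K} (χ : A ⟶ B) (hA : IsTame A) (hB : IsTame B) :
    IsTame (kernel χ) := by
  obtain ⟨β, hβ, hAβ, hBβ⟩ := exists_common_alpha hA hB
  exact ⟨β, hβ, fun v hv => isIso_kernel_map χ hv (hAβ v hv) (hBβ v hv)⟩

theorem isTame_cokernel {A B : Qr r ⥤ ModuleCat.{0} K} (χ : A ⟶ B) (hA : IsTame A) (hB : IsTame B) :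
    IsTame (cokernel χ) := by
  obtain ⟨β, hβ, hAβ, hBβ⟩ := exists_common_alpha hA hB
  exact ⟨β, hβ, fun v hv => isIso_cokernel_map χ hv (hAβ v hv) (hBβ v hv)⟩

end
end Cat


/-! ### Noise system closure lemmas -/

section Noise
open CategoryTheory.Abelian.Pseudoelement
open scoped Pseudoelement

variable {K : Type} [Field K] {r : ℕ}

theorem pseudo_id_apply {C : Type*} [Category C] [Abelian C] {X : C}
    (a : CategoryTheory.Abelian.Pseudoelement X) :
    (𝟙 X) a = a := by
  refine Quotient.inductionOn a (fun b => ?_)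
  rw [pseudoApply_mk']
  exact Quotient.sound ⟨b.left, 𝟙 _, 𝟙 _, inferInstance, inferInstance, by simp⟩

noncomputable section

theorem NoiseSystem.mem_of_epi (N : NoiseSystem K r) {A B : Qr r ⥤ ModuleCat.{0} K} (g : B ⟶ A)
    [Epi g] (ε : ℚ≥0) (hB : B ∈ N.S ε) (hA : IsTame A) : A ∈ N.S ε :=
  (N.ses_small _ _ _ (kernel.ι g) g (kernel.condition g)
    { exact := ShortComplex.exact_of_f_is_kernel _ (kernelIsKernel g)
      mono_f := inferInstance
      epi_g := inferInstance }
    (show IsTame (kernel g) by exact isTame_kernel (K := K) (r := r) g (N.tame_mem _ _ hB) hA) hA ε hB).2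

theorem NoiseSystem.mem_of_mono (N : NoiseSystem K r) {A B : Qr r ⥤ ModuleCat.{0} K} (f : A ⟶ B)
    [Mono f] (ε : ℚ≥0) (hB : B ∈ N.S ε) (hA : IsTame A) : A ∈ N.S ε :=
  (N.ses_small _ _ _ f (cokernel.π f) (cokernel.condition f)
    { exact := ShortComplex.exact_of_g_is_cokernel _ (cokernelIsCokernel f)
      mono_f := inferInstance
      epi_g := inferInstance }
    hA (show IsTame (cokernel f) by exact isTame_cokernel (K := K) (r := r) f hA (N.tame_mem _ _ hB)) ε hB).1

theorem NoiseSystem.mem_of_iso (N : NoiseSystem K r) {A B : Qr r ⥤ ModuleCat.{0} K} (e : A ≅ B)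
    (ε : ℚ≥0) (hB : B ∈ N.S ε) : A ∈ N.S ε :=
  N.mem_of_mono e.hom ε hB (isTame_of_iso e (N.tame_mem _ _ hB))

theorem NoiseSystem.kernel_comp_mem (N : NoiseSystem K r) {F G H : Qr r ⥤ ModuleCat.{0} K}
    (hF : IsTame F) (hG : IsTame G) (hH : IsTame H) (φ : F ⟶ G) (ψ : G ⟶ H) (τ₁ τ₂ : ℚ≥0)
    (h1 : kernel φ ∈ N.S τ₁) (h2 : kernel ψ ∈ N.S τ₂) : kernel (φ ≫ ψ) ∈ N.S (τ₁ + τ₂) := by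
  have tk1 : IsTame (kernel φ) := isTame_kernel φ hF hG
  have tk12 : IsTame (kernel (φ ≫ ψ)) := isTame_kernel _ hF hH
  have tk2 : IsTame (kernel ψ) := isTame_kernel ψ hG hH
  set k : kernel φ ⟶ kernel (φ ≫ ψ) := kernel.lift (φ ≫ ψ) (kernel.ι φ) (by simp) with hk
  have hkι : k ≫ kernel.ι (φ ≫ ψ) = kernel.ι φ := kernel.lift_ι _ _ _
  have hmk : Mono k := mono_of_mono_fac hkι
  set t : kernel (φ ≫ ψ) ⟶ kernel ψ := kernel.lift ψ (kernel.ι (φ ≫ ψ) ≫ φ)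
    (by rw [Category.assoc, kernel.condition]) with ht
  have htι : t ≫ kernel.ι ψ = kernel.ι (φ ≫ ψ) ≫ φ := kernel.lift_ι _ _ _
  have hkt : k ≫ t = 0 := by
    rw [← cancel_mono (kernel.ι ψ), Category.assoc, htι, ← Category.assoc, hkι]
    simp
  set u : cokernel k ⟶ kernel ψ := cokernel.desc k t hkt with hu
  have hπu : cokernel.π k ≫ u = t := cokernel.π_desc _ _ _
  have hmu : Mono u := by
    apply mono_of_zero_of_map_zero
    intro q hq
    obtain ⟨x, hx⟩ := pseudo_surjective_of_epi (cokernel.π k) q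
    have hx0 : t x = 0 := by rw [← hπu, Abelian.Pseudoelement.comp_apply, hx, hq]
    have hφx : φ ((kernel.ι (φ ≫ ψ)) x) = 0 := by
      rw [← Abelian.Pseudoelement.comp_apply, ← htι, Abelian.Pseudoelement.comp_apply, hx0, Abelian.Pseudoelement.apply_zero]
    obtain ⟨y, hy⟩ := pseudo_exact_of_exact
      (ShortComplex.exact_of_f_is_kernel (ShortComplex.mk (kernel.ι φ) φ (kernel.condition φ))
        (kernelIsKernel φ)) ((kernel.ι (φ ≫ ψ)) x) hφx
    have hky : k y = x := by
      apply pseudo_injective_of_mono (kernel.ι (φ ≫ ψ))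
      rw [← Abelian.Pseudoelement.comp_apply, hkι]
      exact hy
    rw [← hx, ← hky, ← Abelian.Pseudoelement.comp_apply, cokernel.condition, Abelian.Pseudoelement.zero_apply]
  have hQ : cokernel k ∈ N.S τ₂ := N.mem_of_mono u τ₂ h2 (isTame_cokernel k tk1 tk12)
  exact N.ses_add _ _ _ k (cokernel.π k) (cokernel.condition k)
    { exact := ShortComplex.exact_of_g_is_cokernel _ (cokernelIsCokernel k)
      mono_f := hmk
      epi_g := inferInstance } tk12 τ₁ τ₂ h1 hQ

theorem NoiseSystem.cokernel_comp_mem (N : NoiseSystem K r) {F G H : Qr r ⥤ ModuleCat.{0} K}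
    (hF : IsTame F) (hG : IsTame G) (hH : IsTame H) (φ : F ⟶ G) (ψ : G ⟶ H) (μ₁ μ₂ : ℚ≥0)
    (h1 : cokernel φ ∈ N.S μ₁) (h2 : cokernel ψ ∈ N.S μ₂) :
    cokernel (φ ≫ ψ) ∈ N.S (μ₁ + μ₂) := by
  have tc1 : IsTame (cokernel φ) := isTame_cokernel φ hF hG
  have tc12 : IsTame (cokernel (φ ≫ ψ)) := isTame_cokernel _ hF hH
  have tc2 : IsTame (cokernel ψ) := isTame_cokernel ψ hG hH
  set d : cokernel (φ ≫ ψ) ⟶ cokernel ψ := cokernel.desc (φ ≫ ψ) (cokernel.π ψ)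
    (by rw [Category.assoc, cokernel.condition, comp_zero]) with hd
  have hπd : cokernel.π (φ ≫ ψ) ≫ d = cokernel.π ψ := cokernel.π_desc _ _ _
  have hepid : Epi d := epi_of_epi_fac hπd
  set e : cokernel φ ⟶ cokernel (φ ≫ ψ) := cokernel.desc φ (ψ ≫ cokernel.π (φ ≫ ψ))
    (by rw [← Category.assoc, cokernel.condition]) with he
  have hπe : cokernel.π φ ≫ e = ψ ≫ cokernel.π (φ ≫ ψ) := cokernel.π_desc _ _ _
  have hed : e ≫ d = 0 := by
    rw [← cancel_epi (cokernel.π φ), ← Category.assoc, hπe, Category.assoc, hπd]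
    simp
  set e' : cokernel φ ⟶ kernel d := kernel.lift d e hed with he'
  have he'ι : e' ≫ kernel.ι d = e := kernel.lift_ι _ _ _
  have hee : Epi e' := by
    apply epi_of_pseudo_surjective
    intro z
    obtain ⟨x, hx⟩ := pseudo_surjective_of_epi (cokernel.π (φ ≫ ψ)) ((kernel.ι d) z)
    have hx0 : (cokernel.π ψ) x = 0 := by
      rw [← hπd, Abelian.Pseudoelement.comp_apply, hx, ← Abelian.Pseudoelement.comp_apply, kernel.condition, Abelian.Pseudoelement.zero_apply]
    obtain ⟨g, hg⟩ := pseudo_exact_of_exact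
      (ShortComplex.exact_of_g_is_cokernel
        (ShortComplex.mk ψ (cokernel.π ψ) (cokernel.condition ψ)) (cokernelIsCokernel ψ)) x hx0
    refine ⟨(cokernel.π φ) g, ?_⟩
    apply pseudo_injective_of_mono (kernel.ι d)
    rw [← Abelian.Pseudoelement.comp_apply, he'ι, ← Abelian.Pseudoelement.comp_apply, hπe, Abelian.Pseudoelement.comp_apply, hg, hx]
  have hK : kernel d ∈ N.S μ₁ := N.mem_of_epi e' μ₁ h1 (isTame_kernel d tc12 tc2)
  exact N.ses_add _ _ _ (kernel.ι d) d (kernel.condition d)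
    { exact := ShortComplex.exact_of_f_is_kernel _ (kernelIsKernel d)
      mono_f := inferInstance
      epi_g := hepid } tc12 μ₁ μ₂ hK h2

end
end Noise

section PoPb
open CategoryTheory.Abelian.Pseudoelement
open scoped Pseudoelement

variable {K : Type} [Field K] {r : ℕ}

noncomputable section

theorem NoiseSystem.pushout_mem (N : NoiseSystem K r) {H F G P : Qr r ⥤ ModuleCat.{0} K}
    (hH : IsTame H) (hF : IsTame F) (hG : IsTame G) (hP : IsTame P)
    (φ : H ⟶ F) (t : H ⟶ G) (s : F ⟶ P) (φ' : G ⟶ P) (hpo : IsPushout φ t s φ') (ε : ℚ≥0)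
    (h : IsEpsEquiv N ε φ) : IsEpsEquiv N ε φ' := by
  obtain ⟨τ, μ, hτμ, hker, hcok⟩ := h
  refine ⟨τ, μ, hτμ, ?_, ?_⟩
  · -- kernel φ' is a quotient of kernel φ
    have cond0 : biprod.lift φ (-t) ≫ biprod.desc s φ' = 0 := by
      rw [biprod.lift_desc]
      simp [hpo.w]
    have hcolim : IsColimit (CokernelCofork.ofπ (biprod.desc s φ') cond0) := by
      refine Cofork.IsColimit.mk _
        (fun sc => hpo.desc (biprod.inl ≫ Cofork.π sc) (biprod.inr ≫ Cofork.π sc)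
          (sub_eq_zero.1 ?_)) (fun sc => ?_) (fun sc m hm => ?_)
      · rw [← Category.assoc, ← Category.assoc, ← Preadditive.sub_comp, sub_eq_add_neg,
          ← Preadditive.neg_comp, ← biprod.lift_eq, Cofork.condition sc, zero_comp]
      · apply biprod.hom_ext' <;> simp [hpo.inl_desc, hpo.inr_desc]
      · apply hpo.hom_ext
        · rw [hpo.inl_desc, ← hm]
          simp
        · rw [hpo.inr_desc, ← hm]
          simp
    set κ : kernel φ ⟶ kernel φ' := kernel.lift φ' (kernel.ι φ ≫ t)
      (by rw [Category.assoc, ← hpo.w, ← Category.assoc, kernel.condition, zero_comp]) with hκ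
    have hκι : κ ≫ kernel.ι φ' = kernel.ι φ ≫ t := kernel.lift_ι _ _ _
    have hexact := ShortComplex.exact_of_g_is_cokernel
      (ShortComplex.mk (biprod.lift φ (-t)) (biprod.desc s φ') cond0) hcolim
    have hker_exact := ShortComplex.exact_of_f_is_kernel
      (ShortComplex.mk (kernel.ι φ) φ (kernel.condition φ)) (kernelIsKernel φ)
    have hsur : Function.Surjective (pseudoApply (κ ≫ (-𝟙 (kernel φ')))) := by
      intro z
      have hg0 : (biprod.desc s φ') ((biprod.inr : G ⟶ F ⊞ G) ((kernel.ι φ') z)) = 0 := by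
        rw [← Abelian.Pseudoelement.comp_apply, biprod.inr_desc, ← Abelian.Pseudoelement.comp_apply,
          kernel.condition, Abelian.Pseudoelement.zero_apply]
      obtain ⟨a, ha⟩ := pseudo_exact_of_exact hexact _ hg0
      have hφa : φ a = 0 := by
        have h1 : (biprod.lift φ (-t) ≫ biprod.fst) a
            = ((biprod.inr : G ⟶ F ⊞ G) ≫ biprod.fst) ((kernel.ι φ') z) := by
          rw [Abelian.Pseudoelement.comp_apply, ha, ← Abelian.Pseudoelement.comp_apply]
        rwa [biprod.lift_fst, biprod.inr_fst, Abelian.Pseudoelement.zero_apply] at h1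
      obtain ⟨y, hy⟩ := pseudo_exact_of_exact hker_exact a hφa
      refine ⟨y, ?_⟩
      have hta : (biprod.lift φ (-t) ≫ biprod.snd) a
          = ((biprod.inr : G ⟶ F ⊞ G) ≫ biprod.snd) ((kernel.ι φ') z) := by
        rw [Abelian.Pseudoelement.comp_apply, ha, ← Abelian.Pseudoelement.comp_apply]
      rw [biprod.lift_snd, biprod.inr_snd, pseudo_id_apply] at hta
      have hκy : (kernel.ι φ') (κ y) = (kernel.ι φ') ((-𝟙 (kernel φ')) z) := by
        calc (kernel.ι φ') (κ y) = (κ ≫ kernel.ι φ') y :=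
              (Abelian.Pseudoelement.comp_apply _ _ _).symm
          _ = (kernel.ι φ ≫ t) y := by rw [hκι]
          _ = t ((kernel.ι φ) y) := Abelian.Pseudoelement.comp_apply _ _ _
          _ = t a := by rw [hy]
          _ = ((-t) ≫ (-𝟙 G)) a := by rw [show (-t) ≫ (-𝟙 G) = t by simp]
          _ = (-𝟙 G) ((-t) a) := Abelian.Pseudoelement.comp_apply _ _ _
          _ = (-𝟙 G) ((kernel.ι φ') z) := by rw [hta]
          _ = (kernel.ι φ' ≫ (-𝟙 G)) z := (Abelian.Pseudoelement.comp_apply _ _ _).symm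
          _ = ((-𝟙 (kernel φ')) ≫ kernel.ι φ') z := by rw [show kernel.ι φ' ≫ (-𝟙 G)
                = (-𝟙 (kernel φ')) ≫ kernel.ι φ' by simp]
          _ = (kernel.ι φ') ((-𝟙 (kernel φ')) z) := Abelian.Pseudoelement.comp_apply _ _ _
      have hfin : κ y = (-𝟙 (kernel φ')) z := pseudo_injective_of_mono _ hκy
      rw [Abelian.Pseudoelement.comp_apply, hfin, ← Abelian.Pseudoelement.comp_apply,
        show ((-𝟙 (kernel φ')) ≫ (-𝟙 (kernel φ'))) = 𝟙 _ by simp, pseudo_id_apply]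
    haveI hepi2 : Epi (κ ≫ (-𝟙 (kernel φ'))) := epi_of_pseudo_surjective _ hsur
    haveI hepi : Epi κ := by
      have hfac : (κ ≫ (-𝟙 (kernel φ'))) ≫ (-𝟙 (kernel φ')) = κ := by simp
      haveI : IsIso (-𝟙 (kernel φ')) := ⟨⟨-𝟙 _, by simp, by simp⟩⟩
      rw [← hfac]
      exact epi_comp _ _
    exact N.mem_of_epi κ τ hker (show IsTame (kernel φ')
      by exact isTame_kernel (K := K) (r := r) φ' hG hP)
  · -- cokernel φ' ≅ cokernel φ
    set c : cokernel φ ⟶ cokernel φ' := cokernel.desc φ (s ≫ cokernel.π φ')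
      (by rw [← Category.assoc, hpo.w, Category.assoc, cokernel.condition, comp_zero]) with hc
    have hπc : cokernel.π φ ≫ c = s ≫ cokernel.π φ' := cokernel.π_desc _ _ _
    set p : P ⟶ cokernel φ := hpo.desc (cokernel.π φ) 0 (by simp) with hp
    have hsp : s ≫ p = cokernel.π φ := hpo.inl_desc _ _ _
    have hφ'p : φ' ≫ p = 0 := hpo.inr_desc _ _ _
    set c' : cokernel φ' ⟶ cokernel φ := cokernel.desc φ' p hφ'p with hc'
    have hπc' : cokernel.π φ' ≫ c' = p := cokernel.π_desc _ _ _
    have h1 : c ≫ c' = 𝟙 _ := by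
      rw [← cancel_epi (cokernel.π φ), ← Category.assoc, hπc, Category.assoc, hπc',
        hsp, Category.comp_id]
    have h2 : c' ≫ c = 𝟙 _ := by
      rw [← cancel_epi (cokernel.π φ'), ← Category.assoc, hπc', Category.comp_id]
      apply hpo.hom_ext
      · rw [← Category.assoc, hsp, hπc]
      · rw [← Category.assoc, hφ'p, zero_comp, cokernel.condition]
    exact N.mem_of_iso ⟨c', c, h2, h1⟩ μ hcok

theorem NoiseSystem.pullback_mem (N : NoiseSystem K r) {H F G P : Qr r ⥤ ModuleCat.{0} K}
    (hH : IsTame H) (hF : IsTame F) (hG : IsTame G) (hP : IsTame P)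
    (φ : H ⟶ F) (t : H ⟶ G) (s : F ⟶ P) (φ' : G ⟶ P) (hpb : IsPullback φ t s φ') (ε : ℚ≥0)
    (h : IsEpsEquiv N ε φ') : IsEpsEquiv N ε φ := by
  obtain ⟨τ, μ, hτμ, hker, hcok⟩ := h
  refine ⟨τ, μ, hτμ, ?_, ?_⟩
  · -- kernel φ ≅ kernel φ'
    set κ : kernel φ ⟶ kernel φ' := kernel.lift φ' (kernel.ι φ ≫ t)
      (by rw [Category.assoc, ← hpb.w, ← Category.assoc, kernel.condition, zero_comp]) with hκ
    have hκι : κ ≫ kernel.ι φ' = kernel.ι φ ≫ t := kernel.lift_ι _ _ _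
    set w0 : kernel φ' ⟶ H := hpb.lift 0 (kernel.ι φ') (by simp) with hw0
    have hw0φ : w0 ≫ φ = 0 := hpb.lift_fst _ _ _
    have hw0t : w0 ≫ t = kernel.ι φ' := hpb.lift_snd _ _ _
    set κ' : kernel φ' ⟶ kernel φ := kernel.lift φ w0 hw0φ with hκ'
    have hκ'ι : κ' ≫ kernel.ι φ = w0 := kernel.lift_ι _ _ _
    have h1 : κ ≫ κ' = 𝟙 _ := by
      rw [← cancel_mono (kernel.ι φ), Category.assoc, hκ'ι, Category.id_comp]
      apply hpb.hom_ext
      · rw [Category.assoc, hw0φ, comp_zero, kernel.condition]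
      · rw [Category.assoc, hw0t, hκι]
    have h2 : κ' ≫ κ = 𝟙 _ := by
      rw [← cancel_mono (kernel.ι φ'), Category.assoc, hκι, ← Category.assoc, hκ'ι, hw0t,
        Category.id_comp]
    exact N.mem_of_iso ⟨κ, κ', h1, h2⟩ τ hker
  · -- cokernel φ is a subobject of cokernel φ'
    set c : cokernel φ ⟶ cokernel φ' := cokernel.desc φ (s ≫ cokernel.π φ')
      (by rw [← Category.assoc, hpb.w, Category.assoc, cokernel.condition, comp_zero]) with hc
    have hπc : cokernel.π φ ≫ c = s ≫ cokernel.π φ' := cokernel.π_desc _ _ _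
    have hcok_exact := ShortComplex.exact_of_g_is_cokernel
      (ShortComplex.mk φ' (cokernel.π φ') (cokernel.condition φ')) (cokernelIsCokernel φ')
    haveI hm : Mono c := by
      apply mono_of_zero_of_map_zero
      intro a ha
      obtain ⟨f0, hf0⟩ := pseudo_surjective_of_epi (cokernel.π φ) a
      have hsf : (cokernel.π φ') (s f0) = 0 := by
        rw [← Abelian.Pseudoelement.comp_apply, ← hπc, Abelian.Pseudoelement.comp_apply, hf0, ha]
      obtain ⟨g0, hg0⟩ := pseudo_exact_of_exact hcok_exact (s f0) hsf
      obtain ⟨pe, hpe1, hpe2⟩ := pseudo_pullback (f := s) (g := φ') (p := f0) (q := g0) hg0.symm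
      have hφpe : φ (hpb.isoPullback.inv pe) = f0 := by
        rw [← Abelian.Pseudoelement.comp_apply, hpb.isoPullback_inv_fst, hpe1]
      rw [← hf0, ← hφpe, ← Abelian.Pseudoelement.comp_apply, cokernel.condition,
        Abelian.Pseudoelement.zero_apply]
    exact N.mem_of_mono c μ hcok (show IsTame (cokernel φ)
      by exact isTame_cokernel (K := K) (r := r) φ hH hF)

end
end PoPb

/-- `ε`-equivalences compose additively in `ε`, and are preserved by pushouts and
pullbacks. -/
theorem epsEquiv_comp_pushout_pullback {K : Type} [Field K] {r : ℕ} (N : NoiseSystem K r) :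
    (∀ (F G H : Qr r ⥤ ModuleCat K), IsTame F → IsTame G → IsTame H →
      ∀ (φ : F ⟶ G) (ψ : G ⟶ H) (ε₁ ε₂ : ℚ≥0),
        IsEpsEquiv N ε₁ φ → IsEpsEquiv N ε₂ ψ → IsEpsEquiv N (ε₁ + ε₂) (φ ≫ ψ)) ∧
    (∀ (H F G P : Qr r ⥤ ModuleCat K), IsTame H → IsTame F → IsTame G → IsTame P →
      ∀ (φ : H ⟶ F) (t : H ⟶ G) (s : F ⟶ P) (φ' : G ⟶ P),
        IsPushout φ t s φ' → ∀ ε : ℚ≥0, IsEpsEquiv N ε φ → IsEpsEquiv N ε φ') ∧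
    (∀ (H F G P : Qr r ⥤ ModuleCat K), IsTame H → IsTame F → IsTame G → IsTame P →
      ∀ (φ : H ⟶ F) (t : H ⟶ G) (s : F ⟶ P) (φ' : G ⟶ P),
        IsPullback φ t s φ' → ∀ ε : ℚ≥0, IsEpsEquiv N ε φ' → IsEpsEquiv N ε φ) := by
  refine ⟨?_, ?_, ?_⟩
  · intro F G H hF hG hH φ ψ ε₁ ε₂ h1 h2
    obtain ⟨τ₁, μ₁, hτμ₁, hk1, hc1⟩ := h1
    obtain ⟨τ₂, μ₂, hτμ₂, hk2, hc2⟩ := h2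
    refine ⟨τ₁ + τ₂, μ₁ + μ₂, ?_,
      N.kernel_comp_mem hF hG hH φ ψ τ₁ τ₂ hk1 hk2,
      N.cokernel_comp_mem hF hG hH φ ψ μ₁ μ₂ hc1 hc2⟩
    calc τ₁ + τ₂ + (μ₁ + μ₂) = (τ₁ + μ₁) + (τ₂ + μ₂) := by ring
      _ ≤ ε₁ + ε₂ := add_le_add hτμ₁ hτμ₂
  · intro H F G P hH hF hG hP φ t s φ' hpo ε h
    exact N.pushout_mem hH hF hG hP φ t s φ' hpo ε h
  · intro H F G P hH hF hG hP φ t s φ' hpb ε h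
    exact N.pullback_mem hH hF hG hP φ t s φ' hpb ε h
end
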